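/- Let k_S(x,x') = 2∑_{n=1}^S sin(nπx)sin(nπx')/(n²π²) on [0,1]×[0,1]. Then there exists K > 0 such that for every S ∈ ℕ and every x, y, x' ∈ [0,1], |k_S(x,x') − k_S(y,x')| ≤ K|x − y|; consequently the limit kernel k(x,x') = min{x,x'} − xx' is Lipschitz continuous in its first argument uniformly in the second. -/

import Mathlib

open Real

lemma dirichlet_bound {θ : ℝ} (h0 : 0 < θ) (hπ : θ ≤ π) (m : ℕ) :
    |∑ i ∈ Finset.range m, Real.sin (((i:ℝ)+1) * θ)| ≤ π / θ := by
  have hpi := Real.pi_pos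
  have hs : 0 < Real.sin (θ/2) :=
    Real.sin_pos_of_pos_of_lt_pi (by linarith) (by linarith)
  set f : ℕ → ℝ := fun i => Real.cos (((i:ℝ)+1/2)*θ) with hf
  have key : 2 * Real.sin (θ/2) * ∑ i ∈ Finset.range m, Real.sin (((i:ℝ)+1)*θ)
      = f 0 - f m := by
    rw [Finset.mul_sum, ← Finset.sum_range_sub' f m]
    refine Finset.sum_congr rfl fun i _ => ?_
    simp only [hf]
    rw [Real.cos_sub_cos]
    push_cast
    rw [show (((i:ℝ)+1/2)*θ + ((i:ℝ)+1+1/2)*θ)/2 = ((i:ℝ)+1)*θ by ring,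
        show (((i:ℝ)+1/2)*θ - ((i:ℝ)+1+1/2)*θ)/2 = -(θ/2) by ring,
        Real.sin_neg]
    ring
  have hb : |2 * Real.sin (θ/2) * ∑ i ∈ Finset.range m, Real.sin (((i:ℝ)+1)*θ)| ≤ 2 := by
    rw [key]
    calc |f 0 - f m| ≤ |f 0| + |f m| := abs_sub _ _
      _ ≤ 1 + 1 := by
          gcongr <;> exact Real.abs_cos_le_one _
      _ = 2 := by norm_num
  have hsin : θ / π ≤ Real.sin (θ/2) := by
    have := Real.mul_le_sin (x := θ/2) (by linarith) (by linarith)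
    calc θ/π = 2/π * (θ/2) := by field_simp
      _ ≤ Real.sin (θ/2) := this
  have h1 : |∑ i ∈ Finset.range m, Real.sin (((i:ℝ)+1)*θ)| ≤ 1 / Real.sin (θ/2) := by
    rw [abs_mul, abs_of_pos (by linarith : (0:ℝ) < 2 * Real.sin (θ/2))] at hb
    rw [le_div_iff₀ hs]
    linarith
  refine h1.trans ?_
  rw [div_le_div_iff₀ hs h0]
  calc 1 * θ = π * (θ/π) := by field_simp
    _ ≤ π * Real.sin (θ/2) := by gcongr

lemma sum_sin_div_core {θ : ℝ} (h0 : 0 < θ) (hπ : θ ≤ π) (N : ℕ) :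
    |∑ n ∈ Finset.range N, Real.sin (((n:ℝ)+1)*θ)/((n:ℝ)+1)| ≤ 1 + 3*π := by
  have hpi := Real.pi_pos
  set M : ℕ := ⌈1/θ⌉₊ with hM
  have hMge : 1/θ ≤ (M:ℝ) := Nat.le_ceil _
  have hMlt : (M:ℝ) < 1/θ + 1 := Nat.ceil_lt_add_one (by positivity)
  have hMθ : (M:ℝ) * θ ≤ 1 + π := by
    have h1 : (1/θ)*θ = 1 := by field_simp
    nlinarith
  have hterm : ∀ n : ℕ, |Real.sin (((n:ℝ)+1)*θ)/((n:ℝ)+1)| ≤ θ := by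
    intro n
    have hn : (0:ℝ) < (n:ℝ)+1 := by positivity
    rw [abs_div, abs_of_pos hn, div_le_iff₀ hn]
    calc |Real.sin (((n:ℝ)+1)*θ)| ≤ |((n:ℝ)+1)*θ| := Real.abs_sin_le_abs
      _ = θ * ((n:ℝ)+1) := by rw [abs_of_pos (by positivity)]; ring
  have hhead : ∀ m : ℕ, m ≤ M →
      |∑ n ∈ Finset.range m, Real.sin (((n:ℝ)+1)*θ)/((n:ℝ)+1)| ≤ 1 + π := by
    intro m hm
    calc |∑ n ∈ Finset.range m, Real.sin (((n:ℝ)+1)*θ)/((n:ℝ)+1)|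
        ≤ ∑ n ∈ Finset.range m, |Real.sin (((n:ℝ)+1)*θ)/((n:ℝ)+1)| :=
          Finset.abs_sum_le_sum_abs _ _
      _ ≤ ∑ n ∈ Finset.range m, θ := Finset.sum_le_sum fun n _ => hterm n
      _ = (m:ℝ) * θ := by rw [Finset.sum_const, Finset.card_range]; ring
      _ ≤ (M:ℝ) * θ := by
          have : (m:ℝ) ≤ (M:ℝ) := by exact_mod_cast hm
          nlinarith
      _ ≤ 1 + π := hMθ
  by_cases hNM : N ≤ M
  · exact (hhead N hNM).trans (by linarith)
  push_neg at hNM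
  -- split
  have hsplit : ∑ n ∈ Finset.range N, Real.sin (((n:ℝ)+1)*θ)/((n:ℝ)+1)
      = (∑ n ∈ Finset.range M, Real.sin (((n:ℝ)+1)*θ)/((n:ℝ)+1))
        + ∑ n ∈ Finset.Ico M N, Real.sin (((n:ℝ)+1)*θ)/((n:ℝ)+1) := by
    exact (Finset.sum_range_add_sum_Ico _ hNM.le).symm
  -- Abel summation on the tail
  set a : ℕ → ℝ := fun i => 1/((i:ℝ)+1) with ha
  set g : ℕ → ℝ := fun i => Real.sin (((i:ℝ)+1)*θ) with hg
  have habel := Finset.sum_Ico_by_parts a g hNM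
  have hD : ∀ m : ℕ, |∑ i ∈ Finset.range m, g i| ≤ π/θ := fun m => dirichlet_bound h0 hπ m
  have hB : (0:ℝ) ≤ π/θ := by positivity
  have hamono : ∀ i : ℕ, a (i+1) ≤ a i := by
    intro i
    simp only [ha]
    apply one_div_le_one_div_of_le (by positivity)
    push_cast; linarith
  have hapos : ∀ i : ℕ, 0 < a i := fun i => by positivity
  have htel : ∑ i ∈ Finset.Ico M (N-1), (a i - a (i+1)) = a M - a (N-1) := by
    have h1 : M ≤ N - 1 := Nat.le_sub_one_of_lt hNM
    rw [Finset.sum_Ico_eq_sub _ h1, Finset.sum_range_sub' a, Finset.sum_range_sub' a]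
    ring
  have htail : |∑ i ∈ Finset.Ico M N, a i * g i| ≤ 2 * (π/θ) * a M := by
    have : ∑ i ∈ Finset.Ico M N, a i • g i =
        a (N-1) • ∑ i ∈ Finset.range N, g i - a M • ∑ i ∈ Finset.range M, g i
          - ∑ i ∈ Finset.Ico M (N-1), (a (i+1) - a i) • ∑ i ∈ Finset.range (i+1), g i :=
      habel
    simp only [smul_eq_mul] at this
    rw [this]
    have h3 : |∑ i ∈ Finset.Ico M (N-1), (a (i+1) - a i) * ∑ j ∈ Finset.range (i+1), g j|
        ≤ (π/θ) * (a M - a (N-1)) := by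
      calc |∑ i ∈ Finset.Ico M (N-1), (a (i+1) - a i) * ∑ j ∈ Finset.range (i+1), g j|
          ≤ ∑ i ∈ Finset.Ico M (N-1), |(a (i+1) - a i) * ∑ j ∈ Finset.range (i+1), g j| :=
            Finset.abs_sum_le_sum_abs _ _
        _ ≤ ∑ i ∈ Finset.Ico M (N-1), (a i - a (i+1)) * (π/θ) := by
            refine Finset.sum_le_sum fun i _ => ?_
            rw [abs_mul, abs_of_nonpos (by linarith [hamono i])]
            have := hD (i+1)
            calc -(a (i+1) - a i) * |∑ j ∈ Finset.range (i+1), g j|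
                ≤ -(a (i+1) - a i) * (π/θ) := by
                  apply mul_le_mul_of_nonneg_left (hD (i+1)) (by linarith [hamono i])
              _ = (a i - a (i+1)) * (π/θ) := by ring
        _ = (a M - a (N-1)) * (π/θ) := by rw [← Finset.sum_mul, htel]
        _ = (π/θ) * (a M - a (N-1)) := by ring
    have h4 : |a (N-1) * ∑ i ∈ Finset.range N, g i| ≤ a (N-1) * (π/θ) := by
      rw [abs_mul, abs_of_pos (hapos _)]
      exact mul_le_mul_of_nonneg_left (hD N) (hapos _).le
    have h5 : |a M * ∑ i ∈ Finset.range M, g i| ≤ a M * (π/θ) := by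
      rw [abs_mul, abs_of_pos (hapos _)]
      exact mul_le_mul_of_nonneg_left (hD M) (hapos _).le
    calc |a (N-1) * ∑ i ∈ Finset.range N, g i - a M * ∑ i ∈ Finset.range M, g i
          - ∑ i ∈ Finset.Ico M (N-1), (a (i+1) - a i) * ∑ j ∈ Finset.range (i+1), g j|
        ≤ |a (N-1) * ∑ i ∈ Finset.range N, g i| + |a M * ∑ i ∈ Finset.range M, g i|
          + |∑ i ∈ Finset.Ico M (N-1), (a (i+1) - a i) * ∑ j ∈ Finset.range (i+1), g j| := by
          calc _ ≤ |a (N-1) * ∑ i ∈ Finset.range N, g i - a M * ∑ i ∈ Finset.range M, g i|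
                + |∑ i ∈ Finset.Ico M (N-1), (a (i+1) - a i) * ∑ j ∈ Finset.range (i+1), g j| :=
                abs_sub _ _
            _ ≤ _ := by
                have := abs_sub (a (N-1) * ∑ i ∈ Finset.range N, g i)
                  (a M * ∑ i ∈ Finset.range M, g i)
                linarith
      _ ≤ a (N-1) * (π/θ) + a M * (π/θ) + (π/θ) * (a M - a (N-1)) := by linarith
      _ = 2 * (π/θ) * a M := by ring
  have haMθ : a M ≤ θ := by
    simp only [ha]
    rw [div_le_iff₀ (by positivity)]
    have h1 : (1:ℝ) ≤ (M:ℝ) * θ := by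
      have := (div_le_iff₀ h0).mp hMge
      linarith
    nlinarith
  have htail2 : |∑ i ∈ Finset.Ico M N, a i * g i| ≤ 2*π := by
    refine htail.trans ?_
    calc 2 * (π/θ) * a M ≤ 2 * (π/θ) * θ := by gcongr
      _ = 2*π := by field_simp
  rw [hsplit]
  have heq : ∀ n : ℕ, Real.sin (((n:ℝ)+1)*θ)/((n:ℝ)+1) = a n * g n := by
    intro n; simp only [ha, hg]; ring
  calc |(∑ n ∈ Finset.range M, Real.sin (((n:ℝ)+1)*θ)/((n:ℝ)+1))
        + ∑ n ∈ Finset.Ico M N, Real.sin (((n:ℝ)+1)*θ)/((n:ℝ)+1)|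
      ≤ |∑ n ∈ Finset.range M, Real.sin (((n:ℝ)+1)*θ)/((n:ℝ)+1)|
        + |∑ n ∈ Finset.Ico M N, Real.sin (((n:ℝ)+1)*θ)/((n:ℝ)+1)| := abs_add_le _ _
    _ ≤ (1+π) + 2*π := by
        gcongr
        · exact hhead M le_rfl
        · simp_rw [heq]; exact htail2
    _ = 1 + 3*π := by ring

lemma sum_sin_div_bounded (θ : ℝ) (N : ℕ) :
    |∑ n ∈ Finset.range N, Real.sin (((n:ℝ)+1)*θ)/((n:ℝ)+1)| ≤ 1 + 3*π := by
  have hpi := Real.pi_pos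
  have h2pi : (0:ℝ) < 2*π := by linarith
  set k : ℤ := ⌊θ/(2*π)⌋ with hk
  set φ : ℝ := θ - k*(2*π) with hφ
  have hφ0 : 0 ≤ φ := by
    rw [hφ, sub_nonneg, ← le_div_iff₀ h2pi]
    exact Int.floor_le _
  have hφ2 : φ < 2*π := by
    rw [hφ, sub_lt_iff_lt_add]
    have := Int.lt_floor_add_one (θ/(2*π))
    have h := (div_lt_iff₀ h2pi).mp this
    linarith [h]
  have hsin : ∀ n : ℕ, Real.sin (((n:ℝ)+1)*θ) = Real.sin (((n:ℝ)+1)*φ) := by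
    intro n
    have : ((n:ℝ)+1)*θ = ((n:ℝ)+1)*φ + ((n+1 : ℤ)*k : ℤ) * (2*π) := by
      push_cast; rw [hφ]; ring
    rw [this, Real.sin_add_int_mul_two_pi]
  simp_rw [hsin]
  rcases eq_or_lt_of_le hφ0 with h0 | h0
  · simp [← h0]
    positivity
  rcases le_or_gt φ π with h1 | h1
  · exact sum_sin_div_core h0 h1 N
  · -- reflect: ψ = 2π - φ ∈ (0, π)
    set ψ : ℝ := 2*π - φ with hψ
    have hψ0 : 0 < ψ := by rw [hψ]; linarith
    have hψπ : ψ ≤ π := by rw [hψ]; linarith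
    have hrefl : ∀ n : ℕ, Real.sin (((n:ℝ)+1)*φ) = -Real.sin (((n:ℝ)+1)*ψ) := by
      intro n
      have : ((n:ℝ)+1)*φ = -( ((n:ℝ)+1)*ψ ) + ((n+1 : ℤ) : ℤ) * (2*π) := by
        push_cast; rw [hψ]; ring
      rw [this, Real.sin_add_int_mul_two_pi, Real.sin_neg]
    simp_rw [hrefl]
    have : ∑ n ∈ Finset.range N, -Real.sin (((n:ℝ)+1)*ψ)/((n:ℝ)+1)
        = -∑ n ∈ Finset.range N, Real.sin (((n:ℝ)+1)*ψ)/((n:ℝ)+1) := by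
      rw [← Finset.sum_neg_distrib]
      exact Finset.sum_congr rfl fun n _ => by ring
    rw [this, abs_neg]
    exact sum_sin_div_core hψ0 hψπ N

lemma deriv_sum_bound (x' t : ℝ) (S : ℕ) :
    |∑ n ∈ Finset.range S,
        2 * (Real.cos (((n:ℝ)+1)*π*t) * (((n:ℝ)+1)*π)) * Real.sin (((n:ℝ)+1)*π*x') /
          (((n:ℝ)+1)^2 * π^2)| ≤ 7 := by
  have hpi := Real.pi_pos
  have heq : ∀ n ∈ Finset.range S,
      2 * (Real.cos (((n:ℝ)+1)*π*t) * (((n:ℝ)+1)*π)) * Real.sin (((n:ℝ)+1)*π*x') /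
          (((n:ℝ)+1)^2 * π^2)
      = (Real.sin (((n:ℝ)+1)*(π*(t+x')))/((n:ℝ)+1)
          - Real.sin (((n:ℝ)+1)*(π*(t-x')))/((n:ℝ)+1)) / π := by
    intro n _
    have hn : ((n:ℝ)+1) ≠ 0 := by positivity
    have h1 : Real.sin (((n:ℝ)+1)*(π*(t+x'))) - Real.sin (((n:ℝ)+1)*(π*(t-x')))
        = 2 * Real.cos (((n:ℝ)+1)*π*t) * Real.sin (((n:ℝ)+1)*π*x') := by
      rw [show ((n:ℝ)+1)*(π*(t+x')) = ((n:ℝ)+1)*π*t + ((n:ℝ)+1)*π*x' by ring,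
          show ((n:ℝ)+1)*(π*(t-x')) = ((n:ℝ)+1)*π*t - ((n:ℝ)+1)*π*x' by ring,
          Real.sin_add, Real.sin_sub]
      ring
    field_simp
    rw [mul_assoc (((n:ℝ)+1)) π (t+x'), mul_assoc (((n:ℝ)+1)) π (t-x')]; linarith [h1]
  rw [Finset.sum_congr rfl heq]
  have hsum : ∑ n ∈ Finset.range S,
      (Real.sin (((n:ℝ)+1)*(π*(t+x')))/((n:ℝ)+1)
        - Real.sin (((n:ℝ)+1)*(π*(t-x')))/((n:ℝ)+1)) / π
      = ((∑ n ∈ Finset.range S, Real.sin (((n:ℝ)+1)*(π*(t+x')))/((n:ℝ)+1))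
        - ∑ n ∈ Finset.range S, Real.sin (((n:ℝ)+1)*(π*(t-x')))/((n:ℝ)+1)) / π := by
    rw [← Finset.sum_sub_distrib, ← Finset.sum_div]
  rw [hsum, abs_div, abs_of_pos hpi, div_le_iff₀ hpi]
  have b1 := sum_sin_div_bounded (π*(t+x')) S
  have b2 := sum_sin_div_bounded (π*(t-x')) S
  have hπ4 : π ≤ 4 := by linarith [Real.pi_lt_d2]
  have hπ3 : 3 ≤ π := by linarith [Real.pi_gt_three]
  calc |(∑ n ∈ Finset.range S, Real.sin (((n:ℝ)+1)*(π*(t+x')))/((n:ℝ)+1))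
        - ∑ n ∈ Finset.range S, Real.sin (((n:ℝ)+1)*(π*(t-x')))/((n:ℝ)+1)|
      ≤ (1+3*π) + (1+3*π) := by
        refine (abs_sub _ _).trans ?_
        linarith
    _ ≤ 7 * π := by linarith

/-- The truncated Mercer expansions `k_S` of the Brownian bridge kernel are
uniformly Lipschitz in the first argument, uniformly in `S` and in the second
argument; consequently the limit kernel `min x x' - x x'` is Lipschitz in its
first argument uniformly in the second. -/
theorem truncated_mercer_uniform_lipschitz :
    ∃ K : ℝ, 0 < K ∧
      (∀ S : ℕ, ∀ x ∈ Set.Icc (0:ℝ) 1, ∀ y ∈ Set.Icc (0:ℝ) 1,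
        ∀ x' ∈ Set.Icc (0:ℝ) 1,
        |(∑ n ∈ Finset.range S,
              2 * Real.sin ((n+1) * π * x) * Real.sin ((n+1) * π * x') /
                (((n:ℝ)+1)^2 * π^2)) -
          (∑ n ∈ Finset.range S,
              2 * Real.sin ((n+1) * π * y) * Real.sin ((n+1) * π * x') /
                (((n:ℝ)+1)^2 * π^2))| ≤ K * |x - y|) ∧
      (∀ x ∈ Set.Icc (0:ℝ) 1, ∀ y ∈ Set.Icc (0:ℝ) 1, ∀ x' ∈ Set.Icc (0:ℝ) 1,
        |(min x x' - x * x') - (min y x' - y * x')| ≤ K * |x - y|) := by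
  refine ⟨7, by norm_num, ?_, ?_⟩
  · intro S x _ y _ x' _
    set F : ℝ → ℝ := fun t => ∑ n ∈ Finset.range S,
        2 * Real.sin (((n:ℝ)+1) * π * t) * Real.sin (((n:ℝ)+1) * π * x') /
          (((n:ℝ)+1)^2 * π^2) with hF
    have hderiv : ∀ t : ℝ, HasDerivAt F
        (∑ n ∈ Finset.range S,
          2 * (Real.cos (((n:ℝ)+1)*π*t) * (((n:ℝ)+1)*π)) * Real.sin (((n:ℝ)+1)*π*x') /
            (((n:ℝ)+1)^2 * π^2)) t := by
      intro t
      apply HasDerivAt.fun_sum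
      intro n _
      have hg : HasDerivAt (fun t : ℝ => ((n:ℝ)+1)*π*t) (((n:ℝ)+1)*π) t := by
        simpa using (hasDerivAt_id t).const_mul (((n:ℝ)+1)*π)
      exact ((hg.sin.const_mul 2).mul_const (Real.sin (((n:ℝ)+1)*π*x'))).div_const
        (((n:ℝ)+1)^2 * π^2)
    have := Convex.norm_image_sub_le_of_norm_hasDerivWithin_le
      (f := F)
      (f' := fun t => ∑ n ∈ Finset.range S,
        2 * (Real.cos (((n:ℝ)+1)*π*t) * (((n:ℝ)+1)*π)) * Real.sin (((n:ℝ)+1)*π*x') /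
          (((n:ℝ)+1)^2 * π^2))
      (s := Set.univ)
      (fun t _ => (hderiv t).hasDerivWithinAt)
      (fun t _ => by rw [Real.norm_eq_abs]; exact deriv_sum_bound x' t S)
      convex_univ (Set.mem_univ y) (Set.mem_univ x)
    simpa [Real.norm_eq_abs, hF] using this
  · intro x _ y _ x' hx'
    have h1 : |min x x' - min y x'| ≤ |x - y| := by
      have := abs_min_sub_min_le_max x x' y x'
      simpa using this
    have h2 : |x * x' - y * x'| ≤ |x - y| := by
      have : x * x' - y * x' = (x - y) * x' := by ring
      rw [this, abs_mul]
      have hx'1 : |x'| ≤ 1 := abs_le.mpr ⟨by linarith [hx'.1], hx'.2⟩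
      nlinarith [abs_nonneg (x-y), abs_nonneg x']
    calc |(min x x' - x * x') - (min y x' - y * x')|
        ≤ |min x x' - min y x'| + |x * x' - y * x'| := by
          have : (min x x' - x * x') - (min y x' - y * x')
              = (min x x' - min y x') - (x * x' - y * x') := by ring
          rw [this]
          exact abs_sub _ _
      _ ≤ |x - y| + |x - y| := by linarith
      _ ≤ 7 * |x - y| := by linarith [abs_nonneg (x - y)]
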